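/- arXiv:1507.08242 — 2 statements merged into one kernel-verified Lean document; each statement's English description precedes it below -/
import Mathlib

section
/- Let KW(G,x) = I - T be the Kac–Ward matrix of a planar weighted graph, let J be the permutation matrix J_{e,e'} = δ_{ē,e'} exchanging each oriented edge with its reversal, and set K = J·KW(G,x). Then K is self-adjoint: K* = K. -/
open scoped Classical
open Matrix

noncomputable section

variable {V F : Type*}

/-- Origin (tail) of an oriented edge `(f, b)` of the graph with endpoint map `ends`. -/
def oTail (ends : F → V × V) (p : F × Bool) : V :=
  if p.2 then (ends p.1).1 else (ends p.1).2

/-- Head (terminal vertex) of an oriented edge. -/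
def oHead (ends : F → V × V) (p : F × Bool) : V :=
  if p.2 then (ends p.1).2 else (ends p.1).1

/-- Reversal of an oriented edge. -/
def oRev (p : F × Bool) : F × Bool := (p.1, !p.2)

/-- Direction (as a complex number) of an oriented edge in the straight-line drawing
given by the vertex positions `pos`. -/
def oDir (ends : F → V × V) (pos : V → ℂ) (p : F × Bool) : ℂ :=
  pos (oHead ends p) - pos (oTail ends p)

/-- The angle (argument of the direction) of an oriented edge. -/
def oAng (ends : F → V × V) (pos : V → ℂ) (p : F × Bool) : ℝ :=
  Complex.arg (oDir ends pos p)

/-- A dimer configuration (perfect matching) on the terminal graph `G^K`: a fixed-point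
free involution of the oriented edges of `G`, matching each oriented edge either to its
reversal (a "long" dimer) or to another oriented edge with the same origin
(a "short" dimer). -/
def IsTerminalMatching (ends : F → V × V) (m : F × Bool → F × Bool) : Prop :=
  Function.Involutive m ∧ (∀ p, m p ≠ p) ∧
    ∀ p, m p = oRev p ∨ oTail ends (m p) = oTail ends p

/-- An even subgraph: a set of edges in which every vertex has even degree. -/
def IsEvenSubgraph [Fintype F] [DecidableEq V] (ends : F → V × V) (P : Finset F) :
    Prop :=
  ∀ v : V, Even ((P.filter (fun f => (ends f).1 = v)).card +
    (P.filter (fun f => (ends f).2 = v)).card)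

/-- The weight `x^K(D)` of a dimer configuration: long edges have weight `1` and the
short edge joining `e, e'` has weight `(x_e x_{e'})^{1/2}`. -/
def matchWeight [Fintype F] (x : F → ℝ) (m : F × Bool → F × Bool) : ℝ :=
  ∏ p ∈ Finset.univ.filter (fun p : F × Bool => m p ≠ oRev p), Real.sqrt (x p.1)

/-- `p` is the endpoint of a short dimer of `m` with the smaller angle. -/
def isLow (ends : F → V × V) (pos : V → ℂ) (m : F × Bool → F × Bool)
    (p : F × Bool) : Prop :=
  m p ≠ oRev p ∧ oAng ends pos p < oAng ends pos (m p)

/-- The number `t(D)` of pairs of (short) dimers of `m` that cross in the drawing: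
two chords at the same vertex cross iff their angles interleave in the cyclic order. -/
def selfCross [Fintype F] (ends : F → V × V) (pos : V → ℂ)
    (m : F × Bool → F × Bool) : ℕ :=
  (Finset.univ.filter (fun pr : (F × Bool) × (F × Bool) =>
    isLow ends pos m pr.1 ∧ isLow ends pos m pr.2 ∧
    oTail ends pr.1 = oTail ends pr.2 ∧
    oAng ends pos pr.1 < oAng ends pos pr.2 ∧
    oAng ends pos pr.2 < oAng ends pos (m pr.1) ∧
    oAng ends pos (m pr.1) < oAng ends pos (m pr.2))).card

/-- The Kac–Ward transition matrix `T`, indexed by oriented edges: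
`T_{e,e'} = exp((i/2)·w(e,e'))·(x_e x_{e'})^{1/2}` if `t(e) = o(e')` and `e' ≠ ē`,
and `0` otherwise, where `w(e,e') ∈ (-π,π)` is the turning angle from `e` to `e'`. -/
def KWT [DecidableEq V] [DecidableEq F] (ends : F → V × V) (pos : V → ℂ)
    (x : F → ℝ) : Matrix (F × Bool) (F × Bool) ℂ :=
  Matrix.of fun e e' =>
    if oHead ends e = oTail ends e' ∧ e' ≠ oRev e then
      Complex.exp (Complex.I *
          ((Complex.arg (oDir ends pos e' / oDir ends pos e) / 2 : ℝ) : ℂ)) *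
        ((Real.sqrt (x e.1 * x e'.1) : ℝ) : ℂ)
    else 0

/-- The Kac–Ward matrix `KW(G,x) = I - T`. -/
def KacWard [DecidableEq V] [DecidableEq F] (ends : F → V × V) (pos : V → ℂ)
    (x : F → ℝ) : Matrix (F × Bool) (F × Bool) ℂ :=
  1 - KWT ends pos x

/-- The permutation matrix `J` exchanging each oriented edge with its reversal. -/
def revMat (F : Type*) [DecidableEq F] : Matrix (F × Bool) (F × Bool) ℂ :=
  Matrix.of fun e e' => if e' = oRev e then 1 else 0

lemma oRev_oRev (p : F × Bool) : oRev (oRev p) = p := by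
  cases p with | mk f b => cases b <;> rfl

@[simp] lemma oRev_fst (p : F × Bool) : (oRev p).1 = p.1 := rfl

lemma oHead_oRev (ends : F → V × V) (p : F × Bool) :
    oHead ends (oRev p) = oTail ends p := by
  cases p with | mk f b => cases b <;> rfl

lemma oTail_oRev (ends : F → V × V) (p : F × Bool) :
    oTail ends (oRev p) = oHead ends p := by
  cases p with | mk f b => cases b <;> rfl

lemma oDir_oRev (ends : F → V × V) (pos : V → ℂ) (p : F × Bool) :
    oDir ends pos (oRev p) = - oDir ends pos p := by
  cases p with | mk f b => cases b <;> simp [oDir, oRev, oHead, oTail]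

lemma oDir_ne_zero (ends : F → V × V) (pos : V → ℂ)
    (hinj : Function.Injective pos) (hloop : ∀ f : F, (ends f).1 ≠ (ends f).2)
    (p : F × Bool) : oDir ends pos p ≠ 0 := by
  cases p with | mk f b =>
    cases b <;> simp only [oDir, oHead, oTail, if_true, if_false, sub_ne_zero,
      Bool.cond_true] <;>
    exact fun h => hloop f (by first | exact hinj h | exact (hinj h).symm)

lemma mem_seg (ends : F → V × V) (pos : V → ℂ) (p : F × Bool) {t : ℝ}
    (ht0 : 0 < t) (ht1 : t < 1) :
    pos (oTail ends p) + (t : ℂ) * oDir ends pos p ∈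
      openSegment ℝ (pos (ends p.1).1) (pos (ends p.1).2) := by
  have key : ∀ a b : ℂ, a + (t : ℂ) * (b - a) ∈ openSegment ℝ a b := by
    intro a b
    rw [openSegment_eq_image]
    refine ⟨t, ⟨ht0, ht1⟩, ?_⟩
    simp only [Complex.real_smul]
    push_cast
    ring
  cases p with
  | mk f bb =>
      cases bb
      · rw [openSegment_symm]
        simpa [oTail, oHead, oDir] using key (pos (ends f).2) (pos (ends f).1)
      · simpa [oTail, oHead, oDir] using key (pos (ends f).1) (pos (ends f).2)

lemma no_parallel (ends : F → V × V) (pos : V → ℂ)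
    (hloop : ∀ f : F, (ends f).1 ≠ (ends f).2)
    (hplanar : ∀ f g : F, f ≠ g → ∀ z : ℂ,
      z ∈ openSegment ℝ (pos (ends f).1) (pos (ends f).2) →
      z ∈ openSegment ℝ (pos (ends g).1) (pos (ends g).2) → False)
    {e e' : F × Bool} (hne : e ≠ e') (ht : oTail ends e = oTail ends e')
    {c : ℝ} (hc : 0 < c)
    (hd : oDir ends pos e = (c : ℂ) * oDir ends pos e') : False := by
  have hf : e.1 ≠ e'.1 := by
    intro h
    have hb : e.2 ≠ e'.2 := fun h2 => hne (Prod.ext h h2)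
    have he' : e' = oRev e := by
      cases e with | mk f b =>
      cases e' with | mk g b' =>
      simp only at h; subst h
      cases b <;> cases b' <;> simp_all [oRev]
    rw [he', oTail_oRev] at ht
    cases e with | mk f b =>
      cases b <;> simp [oTail, oHead] at ht <;>
        exact hloop f (by simp [ht])
  set t : ℝ := min 1 c⁻¹ / 2 with htdef
  have htpos : 0 < t := by positivity
  have ht1 : t < 1 := by
    have : min 1 c⁻¹ ≤ 1 := min_le_left _ _
    simp only [htdef]; linarith
  have htc1 : t * c < 1 := by
    have h1 : t ≤ c⁻¹ / 2 := by
      simp only [htdef]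
      have := min_le_right 1 c⁻¹
      linarith
    have h2 : t * c ≤ (c⁻¹ / 2) * c := mul_le_mul_of_nonneg_right h1 hc.le
    have h3 : (c⁻¹ / 2) * c = 1 / 2 := by field_simp
    linarith
  have htcpos : 0 < t * c := mul_pos htpos hc
  have h1 := mem_seg ends pos e htpos ht1
  have h2 := mem_seg ends pos e' htcpos htc1
  have hz : pos (oTail ends e) + (t : ℂ) * oDir ends pos e
      = pos (oTail ends e') + ((t * c : ℝ) : ℂ) * oDir ends pos e' := by
    rw [ht, hd]; push_cast; ring
  rw [hz] at h1
  exact hplanar e.1 e'.1 hf _ (hz ▸ mem_seg ends pos e htpos ht1) h2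


/-- Let `KW(G,x) = I - T` be the Kac–Ward matrix of a planar weighted
graph, `J` the permutation matrix exchanging each oriented edge with its reversal, and
`K = J · KW(G,x)`. Then `K` is self-adjoint: `K* = K`. -/
theorem statement10 [Fintype V] [DecidableEq V] [Fintype F] [DecidableEq F]
    (ends : F → V × V) (pos : V → ℂ) (x : F → ℝ)
    (hx : ∀ f, 0 ≤ x f)
    (hinj : Function.Injective pos)
    (hloop : ∀ f : F, (ends f).1 ≠ (ends f).2)
    (hplanar : ∀ f g : F, f ≠ g → ∀ z : ℂ,
      z ∈ openSegment ℝ (pos (ends f).1) (pos (ends f).2) →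
      z ∈ openSegment ℝ (pos (ends g).1) (pos (ends g).2) → False)
    (hvert : ∀ (f : F) (v : V),
      pos v ∉ openSegment ℝ (pos (ends f).1) (pos (ends f).2)) :
    (revMat F * KacWard ends pos x).conjTranspose = revMat F * KacWard ends pos x := by
  have hmul : ∀ a b : F × Bool,
      (revMat F * KacWard ends pos x) a b = KacWard ends pos x (oRev a) b := by
    intro a b
    simp [Matrix.mul_apply, revMat, ite_mul, zero_mul]
  ext e e'
  rw [Matrix.conjTranspose_apply, hmul, hmul]
  simp only [KacWard, KWT, Matrix.sub_apply, Matrix.one_apply, Matrix.of_apply,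
    oHead_oRev, oRev_oRev, oRev_fst, Complex.star_def, map_sub]
  congr 1
  · rw [apply_ite (starRingEnd ℂ), _root_.map_one, map_zero]
    congr 1
    simp only [eq_iff_iff]
    constructor
    · rintro rfl; rw [oRev_oRev]
    · rintro rfl; rw [oRev_oRev]
  · by_cases h : oTail ends e = oTail ends e' ∧ e' ≠ e
    · rw [if_pos ⟨h.1.symm, fun he => h.2 he.symm⟩, if_pos h]
      set d := oDir ends pos e with hd
      set d' := oDir ends pos e' with hd'
      have hdne : d ≠ 0 := oDir_ne_zero ends pos hinj hloop e
      have hdne' : d' ≠ 0 := oDir_ne_zero ends pos hinj hloop e'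
      rw [oDir_oRev, oDir_oRev, ← hd, ← hd']
      have harg : Complex.arg (d / -d') ≠ Real.pi := by
        intro hpi
        rw [Complex.arg_eq_pi_iff] at hpi
        set z := d / -d' with hz
        have him : (-z).im = 0 := by simp [hpi.2]
        have hre : 0 < (-z).re := by simp [hpi.1]
        have hzr : -z = (((-z).re : ℝ) : ℂ) := by
          apply Complex.ext <;> simp [him]
        have hdd : d = (((-z).re : ℝ) : ℂ) * d' := by
          rw [← hzr]
          field_simp [hz]
          rw [hz, div_neg, neg_mul, neg_neg, div_mul_cancel₀ d hdne']
        exact no_parallel ends pos hloop hplanar h.2.symm h.1 hre hdd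
      have key : Complex.arg (d' / -d) = - Complex.arg (d / -d') := by
        have hzinv : d' / -d = (d / -d')⁻¹ := by
          rw [div_neg, div_neg, inv_neg, inv_div]
        rw [hzinv, Complex.arg_inv, if_neg harg]
      rw [key]
      rw [_root_.map_mul, Complex.conj_ofReal, mul_comm (x e'.1) (x e.1)]
      congr 1
      rw [← Complex.exp_conj]
      congr 1
      rw [_root_.map_mul, Complex.conj_I, Complex.conj_ofReal]
      push_cast
      ring
    · rw [if_neg, if_neg h, map_zero]
      intro hc
      exact h ⟨hc.1.symm, fun he => hc.2 he.symm⟩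
end
end

section
/- Let G be a finite graph embedded in a closed orientable surface Σ of genus g so that the complement is a union of disks. For each homology class α ∈ H_1(Σ; Z/2) let Z_α(G,x) = Σ_{P even subgraph, [P]=α} x(P). Then for any quadratic form q on (H_1(Σ;Z/2), intersection form), the twisted sum Σ_{α} (-1)^{q(α)} Z_α(G,x) and the full high-temperature polynomial satisfy: Z_high(G,x) = 2^{-g} Σ_q (-1)^{Arf(q)} Σ_α (-1)^{q(α)} Z_α(G,x), where the outer sum ranges over all 2^{2g} quadratic forms q refining the intersection form. -/
open scoped Classical


private lemma zmod2_cases (x : ZMod 2) : x = 0 ∨ x = 1 := by revert x; decide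

private lemma exists_quad {H : Type*} [AddCommGroup H] [Module (ZMod 2) H] [Fintype H]
    (B : H → H → ZMod 2)
    (hBl : ∀ a b c : H, B (a + b) c = B a c + B b c)
    (hBr : ∀ a b c : H, B a (b + c) = B a b + B a c)
    (halt : ∀ a : H, B a a = 0) :
    ∃ q : H → ZMod 2, ∀ a b : H, q (a + b) = q a + q b + B a b := by
  classical
  have hB0l : ∀ b : H, B 0 b = 0 := by
    intro b
    have h := hBl 0 0 b
    rw [add_zero] at h
    exact left_eq_add.mp h
  have hB0r : ∀ a : H, B a 0 = 0 := by
    intro a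
    have h := hBr a 0 0
    rw [add_zero] at h
    exact left_eq_add.mp h
  have hsym : ∀ a b : H, B a b = B b a := by
    intro a b
    have h := halt (a + b)
    rw [hBl, hBr, hBr, halt, halt, zero_add, add_zero] at h
    have h2 : ∀ x y : ZMod 2, x + y = 0 → x = y := by decide
    exact h2 _ _ h
  have hsl : ∀ (r : ZMod 2) (a b : H), B (r • a) b = r • B a b := by
    intro r a b
    rcases zmod2_cases r with rfl | rfl
    · simp [hB0l]
    · simp
  have hsr : ∀ (r : ZMod 2) (a b : H), B a (r • b) = r • B a b := by
    intro r a b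
    rcases zmod2_cases r with rfl | rfl
    · simp [hB0r]
    · simp
  let B' : H →ₗ[ZMod 2] H →ₗ[ZMod 2] ZMod 2 :=
    LinearMap.mk₂ (ZMod 2) B hBl hsl (fun a b c => hBr a b c) hsr
  have : Module.Finite (ZMod 2) H := Module.Finite.of_finite
  set n := Module.finrank (ZMod 2) H with hn
  let e : Module.Basis (Fin n) (ZMod 2) H := Module.finBasis (ZMod 2) H
  set T : Finset (Fin n × Fin n) := Finset.univ.filter (fun p => p.1 < p.2) with hT
  refine ⟨fun x => ∑ p ∈ T, e.repr x p.1 * e.repr x p.2 * B (e p.1) (e p.2), ?_⟩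
  intro x y
  set X : Fin n → ZMod 2 := fun i => e.repr x i with hX
  set Y : Fin n → ZMod 2 := fun i => e.repr y i with hY
  have expand : B x y = ∑ i, ∑ j, X i * Y j * B (e i) (e j) := by
    have hx := e.sum_repr x
    have hy := e.sum_repr y
    calc B x y = B' x y := rfl
      _ = B' (∑ i, X i • e i) (∑ j, Y j • e j) := by rw [hx, hy]
      _ = ∑ i, ∑ j, X i * Y j * B (e i) (e j) := by
          simp only [map_sum, map_smul, LinearMap.sum_apply, LinearMap.smul_apply,
            smul_eq_mul, Finset.mul_sum]
          rw [Finset.sum_comm]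
          exact Finset.sum_congr rfl fun i _ => Finset.sum_congr rfl fun j _ => by
            show Y j * (X i * (B' (e i)) (e j)) = X i * Y j * B (e i) (e j)
            show Y j * (X i * B (e i) (e j)) = X i * Y j * B (e i) (e j)
            ring
  -- split the double sum
  have hdiag : ∑ p ∈ Finset.univ.filter (fun p : Fin n × Fin n => ¬ p.1 < p.2 ∧ ¬ p.2 < p.1),
      X p.1 * Y p.2 * B (e p.1) (e p.2) = 0 := by
    refine Finset.sum_eq_zero fun p hp => ?_
    obtain ⟨-, h1, h2⟩ := Finset.mem_filter.mp hp
    have : p.1 = p.2 := le_antisymm (le_of_not_gt h2) (le_of_not_gt h1)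
    rw [this, halt, mul_zero]
  have hswap : ∑ p ∈ Finset.univ.filter (fun p : Fin n × Fin n => ¬ p.1 < p.2 ∧ p.2 < p.1),
      X p.1 * Y p.2 * B (e p.1) (e p.2)
      = ∑ p ∈ T, Y p.1 * X p.2 * B (e p.1) (e p.2) := by
    refine Finset.sum_bij' (fun p _ => p.swap) (fun p _ => p.swap) ?_ ?_ ?_ ?_ ?_
    · intro p hp
      obtain ⟨-, -, h2⟩ := Finset.mem_filter.mp hp
      simp [hT, h2]
    · intro p hp
      rw [Finset.mem_filter] at hp
      simp [hp.2, le_of_lt hp.2, asymm hp.2]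
    · intro p _; exact Prod.swap_swap p
    · intro p _; exact Prod.swap_swap p
    · intro p _
      show X p.1 * Y p.2 * B (e p.1) (e p.2) = Y p.2 * X p.1 * B (e p.2) (e p.1)
      rw [← hsym, mul_comm (X p.1)]
  have expand' : B x y = ∑ p ∈ T, (X p.1 * Y p.2 + Y p.1 * X p.2) * B (e p.1) (e p.2) := by
    rw [expand, ← Finset.sum_product', Finset.univ_product_univ]
    rw [← Finset.sum_filter_add_sum_filter_not Finset.univ (fun p : Fin n × Fin n => p.1 < p.2)]
    rw [← Finset.sum_filter_add_sum_filter_not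
      (Finset.univ.filter (fun p : Fin n × Fin n => ¬ p.1 < p.2)) (fun p => p.2 < p.1)]
    rw [Finset.filter_filter, Finset.filter_filter]
    rw [hswap, hdiag, add_zero]
    rw [← Finset.sum_add_distrib]
    refine Finset.sum_congr rfl fun p _ => ?_
    ring
  have hrepr : ∀ i, e.repr (x + y) i = X i + Y i := by
    intro i; rw [map_add]; rfl
  calc ∑ p ∈ T, e.repr (x+y) p.1 * e.repr (x+y) p.2 * B (e p.1) (e p.2)
      = ∑ p ∈ T, (X p.1 * X p.2 * B (e p.1) (e p.2) + Y p.1 * Y p.2 * B (e p.1) (e p.2)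
          + (X p.1 * Y p.2 + Y p.1 * X p.2) * B (e p.1) (e p.2)) := by
        refine Finset.sum_congr rfl fun p _ => ?_
        rw [hrepr, hrepr]; ring
    _ = (∑ p ∈ T, X p.1 * X p.2 * B (e p.1) (e p.2))
          + (∑ p ∈ T, Y p.1 * Y p.2 * B (e p.1) (e p.2))
          + ∑ p ∈ T, (X p.1 * Y p.2 + Y p.1 * X p.2) * B (e p.1) (e p.2) := by
        rw [Finset.sum_add_distrib, Finset.sum_add_distrib]
    _ = (∑ p ∈ T, X p.1 * X p.2 * B (e p.1) (e p.2))
          + (∑ p ∈ T, Y p.1 * Y p.2 * B (e p.1) (e p.2)) + B x y := by rw [expand']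

private lemma zmod2_cases' (x : ZMod 2) : x = 0 ∨ x = 1 := by revert x; decide
private lemma zmod2_addself' (x : ZMod 2) : x + x = 0 := by revert x; decide

private lemma quad_zero' {H : Type*} [AddCommGroup H] (B : H → H → ZMod 2)
    (halt : ∀ a : H, B a a = 0) (q : H → ZMod 2)
    (hq : ∀ a b : H, q (a + b) = q a + q b + B a b) : q 0 = 0 := by
  have h := hq 0 0
  rw [add_zero, halt, add_zero] at h
  exact (left_eq_add.mp h)

private lemma card_S {H : Type*} [AddCommGroup H] [Module (ZMod 2) H] [Fintype H]
    [DecidableEq H] (g : ℕ) (hcard : Fintype.card H = 2 ^ (2 * g))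
    (B : H → H → ZMod 2)
    (halt : ∀ a : H, B a a = 0)
    (q0 : H → ZMod 2) (hq0 : ∀ a b : H, q0 (a + b) = q0 a + q0 b + B a b) :
    (Finset.univ.filter
      (fun q : H → ZMod 2 => ∀ a b : H, q (a + b) = q a + q b + B a b)).card = 2 ^ (2 * g) := by
  classical
  have : Module.Finite (ZMod 2) H := Module.Finite.of_finite
  letI : Fintype (Module.Dual (ZMod 2) H) :=
    Fintype.ofInjective (fun f => (f : H → ZMod 2)) DFunLike.coe_injective
  have hq00 : q0 0 = 0 := quad_zero' B halt q0 hq0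
  have hbij : (Finset.univ.filter
      (fun q : H → ZMod 2 => ∀ a b : H, q (a + b) = q a + q b + B a b)).card
      = (Finset.univ : Finset (Module.Dual (ZMod 2) H)).card := by
    refine Finset.card_bij' (fun q hq =>
      ({ toFun := fun x => q x + q0 x
         map_add' := by
           intro a b
           have hq' := (Finset.mem_filter.mp hq).2
           show q (a + b) + q0 (a + b) = (q a + q0 a) + (q b + q0 b)
           rw [hq' a b, hq0 a b]
           have h2 := zmod2_addself' (B a b)
           linear_combination h2
         map_smul' := by
           intro r x
           have hq' := (Finset.mem_filter.mp hq).2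
           rcases zmod2_cases' r with rfl | rfl
           · simp [quad_zero' B halt q hq', hq00]
           · simp } : Module.Dual (ZMod 2) H))
      (fun φ _ => fun x => q0 x + φ x) ?_ ?_ ?_ ?_
    · intro q hq; exact Finset.mem_univ _
    · intro φ _
      rw [Finset.mem_filter]
      refine ⟨Finset.mem_univ _, fun a b => ?_⟩
      show q0 (a + b) + φ (a + b) = (q0 a + φ a) + (q0 b + φ b) + B a b
      rw [hq0 a b, map_add]
      ring
    · intro q hq
      funext x
      show q0 x + (q x + q0 x) = q x
      linear_combination zmod2_addself' (q0 x)
    · intro φ _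
      apply LinearMap.ext
      intro x
      show (q0 x + φ x) + q0 x = φ x
      linear_combination zmod2_addself' (q0 x)
  rw [hbij, Finset.card_univ]
  have hfr : Module.finrank (ZMod 2) H = 2 * g := by
    have h1 : Fintype.card H = Fintype.card (ZMod 2) ^ Module.finrank (ZMod 2) H :=
      Module.card_eq_pow_finrank
    rw [ZMod.card, hcard] at h1
    exact Nat.pow_right_injective (le_refl 2) h1.symm
  have h2 : Fintype.card (Module.Dual (ZMod 2) H)
      = Fintype.card (ZMod 2) ^ Module.finrank (ZMod 2) (Module.Dual (ZMod 2) H) :=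
    Module.card_eq_pow_finrank
  rw [ZMod.card, Subspace.dual_finrank_eq, hfr] at h2
  exact h2

private lemma zmod2_cases'' (x : ZMod 2) : x = 0 ∨ x = 1 := by revert x; decide
private lemma zmod2_addself'' (x : ZMod 2) : x + x = 0 := by revert x; decide

private lemma chi_add'' (x y : ZMod 2) :
    (-1 : ℝ) ^ ((x + y).val) = (-1 : ℝ) ^ x.val * (-1 : ℝ) ^ y.val := by
  rcases zmod2_cases'' x with rfl | rfl <;> rcases zmod2_cases'' y with rfl | rfl <;>
    norm_num [show ((0:ZMod 2)+0).val = 0 from rfl, show ((0:ZMod 2)+1).val = 1 from rfl,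
      show ((1:ZMod 2)+0).val = 1 from rfl, show ((1:ZMod 2)+1).val = 0 by decide,
      show (2:ZMod 2).val = 0 by decide,
      show ((0:ZMod 2)).val = 0 from rfl, show ((1:ZMod 2)).val = 1 from rfl]

private lemma quad_zero'' {H : Type*} [AddCommGroup H] (B : H → H → ZMod 2)
    (halt : ∀ a : H, B a a = 0) (q : H → ZMod 2)
    (hq : ∀ a b : H, q (a + b) = q a + q b + B a b) : q 0 = 0 := by
  have h := hq 0 0
  rw [add_zero, halt, add_zero] at h
  exact (left_eq_add.mp h)

private lemma sum_chi'' {H : Type*} [AddCommGroup H] [Module (ZMod 2) H] [Fintype H]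
    [DecidableEq H]
    (B : H → H → ZMod 2)
    (halt : ∀ a : H, B a a = 0)
    (hnd : ∀ a : H, (∀ b : H, B a b = 0) → a = 0)
    (c : H) :
    ∑ q ∈ Finset.univ.filter
        (fun q : H → ZMod 2 => ∀ a b : H, q (a + b) = q a + q b + B a b),
      (-1 : ℝ) ^ ((q c).val)
    = if c = 0 then ((Finset.univ.filter
        (fun q : H → ZMod 2 => ∀ a b : H, q (a + b) = q a + q b + B a b)).card : ℝ) else 0 := by
  classical
  have : Module.Finite (ZMod 2) H := Module.Finite.of_finite
  by_cases hc : c = 0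
  · subst hc
    rw [if_pos rfl]
    rw [Finset.card_eq_sum_ones, Nat.cast_sum]
    refine Finset.sum_congr rfl fun q hq => ?_
    rw [quad_zero'' B halt q (Finset.mem_filter.mp hq).2]
    norm_num
  · rw [if_neg hc]
    obtain ⟨φ, hφ⟩ : ∃ φ : Module.Dual (ZMod 2) H, φ c ≠ 0 := by
      by_contra h
      push_neg at h
      exact hc ((Module.forall_dual_apply_eq_zero_iff (ZMod 2) c).mp h)
    have hφ1 : φ c = 1 := by
      rcases zmod2_cases'' (φ c) with h | h
      · exact absurd h hφ
      · exact h
    refine Finset.sum_involution (fun q _ => fun x => q x + φ x) ?_ ?_ ?_ ?_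
    · intro q hq
      show (-1 : ℝ) ^ ((q c).val) + (-1 : ℝ) ^ ((q c + φ c).val) = 0
      rw [hφ1, chi_add'', show ((1:ZMod 2)).val = 1 from rfl]
      ring
    · intro q hq _
      intro heq
      have h : q c + φ c = q c := congrFun heq c
      rw [hφ1] at h
      have : (1 : ZMod 2) = 0 := by
        have := h
        nth_rewrite 2 [← add_zero (q c)] at this
        exact add_left_cancel this
      exact one_ne_zero this
    · intro q hq
      rw [Finset.mem_filter] at hq ⊢
      refine ⟨Finset.mem_univ _, fun a b => ?_⟩
      show q (a + b) + φ (a + b) = (q a + φ a) + (q b + φ b) + B a b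
      rw [hq.2 a b, map_add]
      ring
    · intro q hq
      funext x
      show (q x + φ x) + φ x = q x
      linear_combination zmod2_addself'' (φ x)

private lemma zmod2_cases3 (x : ZMod 2) : x = 0 ∨ x = 1 := by revert x; decide
private lemma zmod2_addself3 (x : ZMod 2) : x + x = 0 := by revert x; decide

private lemma chi_add3 (x y : ZMod 2) :
    (-1 : ℝ) ^ ((x + y).val) = (-1 : ℝ) ^ x.val * (-1 : ℝ) ^ y.val := by
  rcases zmod2_cases3 x with rfl | rfl <;> rcases zmod2_cases3 y with rfl | rfl <;>
    norm_num [show ((0:ZMod 2)+0).val = 0 from rfl, show ((0:ZMod 2)+1).val = 1 from rfl,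
      show ((1:ZMod 2)+0).val = 1 from rfl, show ((1:ZMod 2)+1).val = 0 by decide,
      show (2:ZMod 2).val = 0 by decide,
      show ((0:ZMod 2)).val = 0 from rfl, show ((1:ZMod 2)).val = 1 from rfl]

private lemma key3 {H : Type*} [AddCommGroup H] [Module (ZMod 2) H] [Fintype H]
    [DecidableEq H] (g : ℕ)
    (B : H → H → ZMod 2)
    (halt : ∀ a : H, B a a = 0)
    (Arf : (H → ZMod 2) → ZMod 2)
    (hArf : ∀ q : H → ZMod 2, (∀ a b : H, q (a + b) = q a + q b + B a b) →
      (-1 : ℝ) ^ ((Arf q).val) = ((2 : ℝ) ^ g)⁻¹ * ∑ a : H, (-1 : ℝ) ^ ((q a).val))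
    (hchi : ∀ c : H,
      ∑ q ∈ Finset.univ.filter
          (fun q : H → ZMod 2 => ∀ a b : H, q (a + b) = q a + q b + B a b),
        (-1 : ℝ) ^ ((q c).val)
      = if c = 0 then ((2 : ℝ) ^ (2 * g)) else 0)
    (α : H) :
    ∑ q ∈ Finset.univ.filter
        (fun q : H → ZMod 2 => ∀ a b : H, q (a + b) = q a + q b + B a b),
      (-1 : ℝ) ^ ((Arf q).val) * (-1 : ℝ) ^ ((q α).val) = 2 ^ g := by
  classical
  set S := Finset.univ.filter
      (fun q : H → ZMod 2 => ∀ a b : H, q (a + b) = q a + q b + B a b) with hS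
  have h2H : ∀ x : H, x + x = 0 := by
    intro x
    have h : x + x = (1 + 1 : ZMod 2) • x := by rw [add_smul, one_smul]
    rw [h, show (1 + 1 : ZMod 2) = 0 by decide, zero_smul]
  have step1 : ∀ q ∈ S, (-1 : ℝ) ^ ((Arf q).val) * (-1 : ℝ) ^ ((q α).val)
      = ((2 : ℝ) ^ g)⁻¹ *
        ∑ b : H, (-1 : ℝ) ^ ((B b α).val) * (-1 : ℝ) ^ ((q (b + α)).val) := by
    intro q hq
    have hq' := (Finset.mem_filter.mp hq).2
    rw [hArf q hq', mul_assoc, Finset.sum_mul]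
    congr 1
    refine Finset.sum_congr rfl fun b _ => ?_
    have e1 : q b + q α = q (b + α) + B b α := by
      rw [hq' b α]; linear_combination -zmod2_addself3 (B b α)
    rw [← chi_add3, e1, chi_add3]
    ring
  rw [Finset.sum_congr rfl step1, ← Finset.mul_sum, Finset.sum_comm]
  have step2 : ∀ b : H,
      ∑ q ∈ S, (-1 : ℝ) ^ ((B b α).val) * (-1 : ℝ) ^ ((q (b + α)).val)
      = if b = α then (2 : ℝ) ^ (2 * g) else 0 := by
    intro b
    rw [← Finset.mul_sum, hchi (b + α)]
    have hiff : (b + α = 0) = (b = α) := by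
      apply propext
      constructor
      · intro h
        have : b + (α + α) = 0 + α := by rw [← add_assoc, h]
        rwa [h2H, add_zero, zero_add] at this
      · rintro rfl; exact h2H _
    simp only [hiff, mul_ite, mul_zero]
    by_cases hb : b = α
    · subst hb
      rw [if_pos rfl, if_pos rfl, halt, show ((0:ZMod 2)).val = 0 from rfl, pow_zero, one_mul]
    · rw [if_neg hb, if_neg hb]
  rw [Finset.sum_congr rfl (fun b _ => step2 b), Finset.sum_ite_eq' Finset.univ α,
    if_pos (Finset.mem_univ α)]
  rw [two_mul, pow_add, ← mul_assoc, inv_mul_cancel₀ (by positivity), one_mul]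

theorem statement14 {H : Type*} [AddCommGroup H] [Module (ZMod 2) H] [Fintype H]
    [DecidableEq H] (g : ℕ) (hcard : Fintype.card H = 2 ^ (2 * g))
    (B : H → H → ZMod 2)
    (hBl : ∀ a b c : H, B (a + b) c = B a c + B b c)
    (hBr : ∀ a b c : H, B a (b + c) = B a b + B a c)
    (halt : ∀ a : H, B a a = 0)
    (hnd : ∀ a : H, (∀ b : H, B a b = 0) → a = 0)
    (Arf : (H → ZMod 2) → ZMod 2)
    (hArf : ∀ q : H → ZMod 2, (∀ a b : H, q (a + b) = q a + q b + B a b) →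
      (-1 : ℝ) ^ ((Arf q).val) = ((2 : ℝ) ^ g)⁻¹ * ∑ a : H, (-1 : ℝ) ^ ((q a).val))
    {ES : Type*} [Fintype ES] (cls : ES → H) (w : ES → ℝ) :
    ∑ P : ES, w P
      = ((2 : ℝ) ^ g)⁻¹ *
        ∑ q ∈ Finset.univ.filter
            (fun q : H → ZMod 2 => ∀ a b : H, q (a + b) = q a + q b + B a b),
          (-1 : ℝ) ^ ((Arf q).val) *
            ∑ a : H, (-1 : ℝ) ^ ((q a).val) *
              ∑ P ∈ Finset.univ.filter (fun P : ES => cls P = a), w P := by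
  classical
  obtain ⟨q0, hq0⟩ := exists_quad B hBl hBr halt
  have hcardS := card_S g hcard B halt q0 hq0
  have hchi : ∀ c : H,
      ∑ q ∈ Finset.univ.filter
          (fun q : H → ZMod 2 => ∀ a b : H, q (a + b) = q a + q b + B a b),
        (-1 : ℝ) ^ ((q c).val)
      = if c = 0 then ((2 : ℝ) ^ (2 * g)) else 0 := by
    intro c
    rw [sum_chi'' B halt hnd c, hcardS]
    push_cast
    rfl
  have key := key3 g B halt Arf hArf hchi
  have hA : ∀ q : H → ZMod 2,
      ∑ a : H, (-1 : ℝ) ^ ((q a).val) *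
        ∑ P ∈ Finset.univ.filter (fun P : ES => cls P = a), w P
      = ∑ P : ES, (-1 : ℝ) ^ ((q (cls P)).val) * w P := by
    intro q
    rw [← Finset.sum_fiberwise Finset.univ cls
      (fun P => (-1 : ℝ) ^ ((q (cls P)).val) * w P)]
    refine Finset.sum_congr rfl fun a _ => ?_
    rw [Finset.mul_sum]
    refine Finset.sum_congr rfl fun P hP => ?_
    rw [(Finset.mem_filter.mp hP).2]
  symm
  calc ((2 : ℝ) ^ g)⁻¹ *
        ∑ q ∈ Finset.univ.filter
            (fun q : H → ZMod 2 => ∀ a b : H, q (a + b) = q a + q b + B a b),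
          (-1 : ℝ) ^ ((Arf q).val) *
            ∑ a : H, (-1 : ℝ) ^ ((q a).val) *
              ∑ P ∈ Finset.univ.filter (fun P : ES => cls P = a), w P
      = ((2 : ℝ) ^ g)⁻¹ *
        ∑ q ∈ Finset.univ.filter
            (fun q : H → ZMod 2 => ∀ a b : H, q (a + b) = q a + q b + B a b),
          ∑ P : ES, ((-1 : ℝ) ^ ((Arf q).val) * (-1 : ℝ) ^ ((q (cls P)).val)) * w P := by
        congr 1
        refine Finset.sum_congr rfl fun q _ => ?_
        rw [hA q, Finset.mul_sum]
        exact Finset.sum_congr rfl fun P _ => by ring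
    _ = ((2 : ℝ) ^ g)⁻¹ *
        ∑ P : ES,
          (∑ q ∈ Finset.univ.filter
              (fun q : H → ZMod 2 => ∀ a b : H, q (a + b) = q a + q b + B a b),
            (-1 : ℝ) ^ ((Arf q).val) * (-1 : ℝ) ^ ((q (cls P)).val)) * w P := by
        rw [Finset.sum_comm]
        congr 1
        exact Finset.sum_congr rfl fun P _ => (Finset.sum_mul _ _ _).symm
    _ = ((2 : ℝ) ^ g)⁻¹ * ∑ P : ES, (2 : ℝ) ^ g * w P := by
        congr 1
        exact Finset.sum_congr rfl fun P _ => by rw [key (cls P)]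
    _ = ∑ P : ES, w P := by
        rw [← Finset.mul_sum, ← mul_assoc, inv_mul_cancel₀ (by positivity), one_mul]
end
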